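/- Let G = ⟨a, t | a^(2^5) = 1, a^(2^2) = t^(2^3), tat⁻¹ = a^9⟩. Then G is a group of order 2^8, its commutator subgroup [G,G] = ⟨a^8⟩ is contained in G^16 but not in G^32, and hence G/G^16 is abelian while G/G^32 is not. -/

import Mathlib

set_option maxRecDepth 40000


/-- The subgroup of `G` generated by all `n`-th powers. -/
def powSubgroup (G : Type*) [Group G] (n : ℕ) : Subgroup G :=
  Subgroup.closure {x : G | ∃ g : G, g ^ n = x}

/-- Relators for `G = ⟨a, t ∣ a ^ 2⁵ = 1, a ^ 2² = t ^ 2³, t a t⁻¹ = a ^ 9⟩`,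
with `a` the generator `0` and `t` the generator `1`. -/
def exampleRels : Set (FreeGroup (Fin 2)) :=
  { FreeGroup.of 0 ^ (2 ^ 5),
    FreeGroup.of 0 ^ (2 ^ 2) * (FreeGroup.of 1 ^ (2 ^ 3))⁻¹,
    FreeGroup.of 1 * FreeGroup.of 0 * (FreeGroup.of 1)⁻¹ * (FreeGroup.of 0 ^ 9)⁻¹ }

namespace IwasawaAux

open Matrix


abbrev R := Matrix (Fin 2) (Fin 2) (ZMod 64)
def MA : R := !![1, 2; 0, 1]
def MT : R := !![9, 5; 0, 1]
def A : Rˣ := ⟨MA, !![1, 62; 0, 1], by decide, by decide⟩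
def T : Rˣ := ⟨MT, !![57, 35; 0, 1], by decide, by decide⟩

theorem hA32 : A ^ 32 = 1 := Units.ext (by decide)
theorem hAT : A ^ 4 = T ^ 8 := Units.ext (by decide)
theorem hTA : T * A = A ^ 9 * T := Units.ext (by decide)

theorem hrelsM : ∀ r ∈ exampleRels, FreeGroup.lift ![A, T] r = 1 := by
  intro r hr
  simp only [exampleRels, Set.mem_insert_iff, Set.mem_singleton_iff] at hr
  rcases hr with rfl | rfl | rfl <;>
    simp only [_root_.map_mul, _root_.map_pow, _root_.map_inv, FreeGroup.lift_apply_of, Matrix.cons_val_zero,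
      Matrix.cons_val_one, Matrix.head_cons]
  · norm_num [hA32]
  · norm_num [hAT]
  · rw [mul_inv_eq_one, mul_inv_eq_iff_eq_mul, hTA]

abbrev P := PresentedGroup exampleRels

noncomputable def π : P →* Rˣ := PresentedGroup.toGroup hrelsM

local notation "a" => (PresentedGroup.of 0 : P)
local notation "t" => (PresentedGroup.of 1 : P)

theorem πa : π a = A := by simp [π, PresentedGroup.toGroup.of]
theorem πt : π t = T := by simp [π, PresentedGroup.toGroup.of]

theorem hrelP : ∀ r ∈ exampleRels, PresentedGroup.mk exampleRels r = 1 := fun r hr =>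
  (QuotientGroup.eq_one_iff _).mpr (Subgroup.subset_normalClosure hr)

theorem ha32 : a ^ 32 = 1 := by
  have := hrelP _ (Set.mem_insert _ _)
  rwa [_root_.map_pow] at this

theorem ha4t8 : a ^ 4 = t ^ 8 := by
  have := hrelP _ (Set.mem_insert_iff.mpr (Or.inr (Set.mem_insert _ _)))
  rw [_root_.map_mul, _root_.map_inv, _root_.map_pow, _root_.map_pow, mul_inv_eq_one] at this
  exact this

theorem hta : t * a = a ^ 9 * t := by
  have := hrelP _ (Set.mem_insert_iff.mpr (Or.inr (Set.mem_insert_iff.mpr (Or.inr rfl))))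
  simp only [_root_.map_mul, _root_.map_inv, _root_.map_pow] at this
  rw [mul_inv_eq_one, mul_inv_eq_iff_eq_mul] at this
  exact this

theorem ta_pow (k : ℕ) : t * a ^ k = a ^ (9 * k) * t := by
  induction k with
  | zero => simp
  | succ k ih =>
      rw [pow_succ, ← mul_assoc, ih, mul_assoc, hta, Nat.mul_add, pow_add]
      group

theorem t_pow_a (j : ℕ) : ∀ k : ℕ, t ^ j * a ^ k = a ^ (9 ^ j * k) * t ^ j := by
  induction j with
  | zero => intro k; simp
  | succ j ih =>
      intro k
      have he : 9 ^ (j + 1) * k = 9 ^ j * (9 * k) := by ring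
      rw [he, pow_succ, mul_assoc, ta_pow, ← mul_assoc, ih, mul_assoc, ← pow_succ]

def InForm (g : P) : Prop := ∃ i j : ℕ, g = a ^ i * t ^ j

theorem form_mul {x y : P} (hx : InForm x) (hy : InForm y) : InForm (x * y) := by
  obtain ⟨i, j, rfl⟩ := hx
  obtain ⟨k, l, rfl⟩ := hy
  refine ⟨i + 9 ^ j * k, j + l, ?_⟩
  rw [mul_assoc, ← mul_assoc (t ^ j), t_pow_a j k, pow_add, pow_add]
  group

theorem form_pow {x : P} (hx : InForm x) (n : ℕ) : InForm (x ^ n) := by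
  induction n with
  | zero => exact ⟨0, 0, by simp⟩
  | succ n ih => rw [pow_succ]; exact form_mul ih hx

theorem form_inv {x : P} (hx : InForm x) : InForm x⁻¹ := by
  obtain ⟨i, j, rfl⟩ := hx
  have hainv : (a)⁻¹ = a ^ 31 := by
    rw [inv_eq_iff_mul_eq_one, ← pow_succ']; exact ha32
  have htinv : (t)⁻¹ = a ^ 28 * t ^ 7 := by
    rw [inv_eq_iff_mul_eq_one, ← mul_assoc, ta_pow, mul_assoc, ← pow_succ', ← ha4t8, ← pow_add]
    rw [show 9 * 28 + 4 = 32 * 8 from rfl, pow_mul, ha32, one_pow]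
  rw [_root_.mul_inv_rev, ← inv_pow, ← inv_pow, hainv, htinv]
  exact form_mul (form_pow ⟨28, 7, rfl⟩ j) (form_pow ⟨31, 0, by simp⟩ i)

theorem form_all (g : P) : InForm g := by
  have hg : g ∈ Subgroup.closure (Set.range (PresentedGroup.of : Fin 2 → P)) := by
    rw [PresentedGroup.closure_range_of]; trivial
  refine Subgroup.closure_induction (p := fun g _ => InForm g) ?_ ⟨0, 0, by simp⟩
    (fun x y _ _ hx hy => form_mul hx hy) (fun x _ hx => form_inv hx) hg
  rintro x ⟨i, rfl⟩
  fin_cases i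
  · exact ⟨1, 0, by simp⟩
  · exact ⟨0, 1, by simp⟩

theorem ha_mod (m : ℕ) : a ^ m = a ^ (m % 32) := by
  conv_lhs => rw [← Nat.div_add_mod m 32, pow_add, pow_mul, ha32, one_pow, one_mul]

noncomputable def fm (p : Fin 32 × Fin 8) : P := a ^ (p.1 : ℕ) * t ^ (p.2 : ℕ)

theorem fm_surj : Function.Surjective fm := by
  intro g
  obtain ⟨i, j, rfl⟩ := form_all g
  have ht : t ^ j = a ^ (4 * (j / 8)) * t ^ (j % 8) := by
    conv_lhs => rw [← Nat.div_add_mod j 8, pow_add, pow_mul, ← ha4t8, ← pow_mul]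
  refine ⟨⟨⟨(i + 4 * (j / 8)) % 32, Nat.mod_lt _ (by norm_num)⟩, ⟨j % 8, Nat.mod_lt _ (by norm_num)⟩⟩, ?_⟩
  simp only [fm, ← ha_mod]
  rw [ht, ← mul_assoc, ← pow_add]

theorem upow (u v : ZMod 64) (n : ℕ) :
    (!![u, v; 0, 1] : R) ^ n = !![u ^ n, v * ∑ k ∈ Finset.range n, u ^ k; 0, 1] := by
  induction n with
  | zero => simp [Matrix.one_fin_two]
  | succ n ih =>
      rw [pow_succ, ih, Matrix.mul_fin_two, Finset.sum_range_succ]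
      ext i j
      fin_cases i <;> fin_cases j <;> simp [Finset.mul_sum, mul_add, mul_comm] <;> ring

theorem MA_pow (n : ℕ) : MA ^ n = !![1, (n : ZMod 64) * 2; 0, 1] := by
  rw [show MA = !![(1 : ZMod 64), 2; 0, 1] from rfl, upow]
  norm_num [Finset.sum_const, mul_comm]

theorem MT_pow (n : ℕ) : MT ^ n = !![(9 : ZMod 64) ^ n, 5 * ∑ k ∈ Finset.range n, (9 : ZMod 64) ^ k; 0, 1] := by
  rw [show MT = !![(9 : ZMod 64), 5; 0, 1] from rfl, upow]

theorem fval (i j : ℕ) : ((A ^ i * T ^ j : Rˣ) : R) =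
    !![(9 : ZMod 64) ^ j, 5 * ∑ k ∈ Finset.range j, (9 : ZMod 64) ^ k + (i : ZMod 64) * 2; 0, 1] := by
  rw [Units.val_mul, Units.val_pow_eq_pow_val, Units.val_pow_eq_pow_val]
  rw [show ((A : Rˣ) : R) = MA from rfl, show ((T : Rˣ) : R) = MT from rfl, MA_pow, MT_pow,
    Matrix.mul_fin_two]
  ext r c
  fin_cases r <;> fin_cases c <;> simp <;> ring

theorem nine_inj : ∀ j l : Fin 8, (9 : ZMod 64) ^ (j : ℕ) = 9 ^ (l : ℕ) → j = l := by decide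

theorem two_inj : ∀ i k : Fin 32, ((i : ℕ) : ZMod 64) * 2 = ((k : ℕ) : ZMod 64) * 2 → i = k := by
  decide

theorem πfm (p : Fin 32 × Fin 8) : π (fm p) = A ^ (p.1 : ℕ) * T ^ (p.2 : ℕ) := by
  rw [fm, _root_.map_mul, _root_.map_pow, _root_.map_pow, πa, πt]

theorem πfm_inj : Function.Injective (fun p => π (fm p)) := by
  intro p q h
  simp only [πfm] at h
  have hv := congrArg Units.val h
  rw [fval, fval] at hv
  have h00 := congrFun (congrFun hv 0) 0
  have h01 := congrFun (congrFun hv 0) 1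
  simp only [Matrix.of_apply, Matrix.cons_val_zero, Matrix.cons_val_one, Matrix.head_cons] at h00 h01
  have hj : p.2 = q.2 := nine_inj _ _ h00
  rw [hj] at h01
  have hi : p.1 = q.1 := two_inj _ _ (by exact add_left_cancel h01)
  exact Prod.ext hi hj

theorem fm_inj : Function.Injective fm := fun p q h => πfm_inj (by simp only [h])

theorem card_P : Nat.card P = 2 ^ 8 := by
  rw [← Nat.card_eq_of_bijective fm ⟨fm_inj, fm_surj⟩]
  simp [Nat.card_eq_fintype_card]

theorem π_inj : Function.Injective π := by
  intro x y h
  obtain ⟨p, rfl⟩ := fm_surj x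
  obtain ⟨q, rfl⟩ := fm_surj y
  exact congrArg fm (πfm_inj h)

theorem hrelsQ : ∀ r ∈ exampleRels,
    FreeGroup.lift ![Multiplicative.ofAdd ((1 : ZMod 4), (2 : ZMod 16)),
      Multiplicative.ofAdd ((0 : ZMod 4), (1 : ZMod 16))] r = 1 := by
  intro r hr
  simp only [exampleRels, Set.mem_insert_iff, Set.mem_singleton_iff] at hr
  rcases hr with rfl | rfl | rfl <;>
    simp only [_root_.map_mul, _root_.map_pow, _root_.map_inv, FreeGroup.lift_apply_of,
      Matrix.cons_val_zero, Matrix.cons_val_one, Matrix.head_cons] <;> decide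

noncomputable def φ : P →* Multiplicative (ZMod 4 × ZMod 16) := PresentedGroup.toGroup hrelsQ

theorem φa : φ a = Multiplicative.ofAdd ((1 : ZMod 4), (2 : ZMod 16)) := by
  simp [φ, PresentedGroup.toGroup.of]

theorem φt : φ t = Multiplicative.ofAdd ((0 : ZMod 4), (1 : ZMod 16)) := by
  simp [φ, PresentedGroup.toGroup.of]

theorem kerlem : ∀ (i : Fin 32) (j : Fin 8),
    ((i : ℕ) : ZMod 4) = 0 → ((i : ℕ) : ZMod 16) * 2 + ((j : ℕ) : ZMod 16) = 0 →
    (i : ℕ) % 8 = 0 ∧ (j : ℕ) = 0 := by decide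

open scoped commutatorElement in
theorem comm_eq : commutator P = Subgroup.zpowers ((a : P) ^ 8) := by
  apply le_antisymm
  · intro g hg
    have hker : φ g = 1 := Abelianization.commutator_subset_ker φ hg
    obtain ⟨⟨i, j⟩, rfl⟩ := fm_surj g
    rw [fm, _root_.map_mul, _root_.map_pow, _root_.map_pow, φa, φt] at hker
    have hadd : ((i : ℕ) • ((1 : ZMod 4), (2 : ZMod 16)) +
        (j : ℕ) • ((0 : ZMod 4), (1 : ZMod 16))) = 0 := by
      simpa [← ofAdd_nsmul, ← ofAdd_add, ofAdd_eq_one] using hker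
    rw [Prod.smul_mk, Prod.smul_mk, Prod.mk_add_mk, Prod.mk_eq_zero] at hadd
    obtain ⟨h1, h2⟩ := hadd
    simp only [nsmul_eq_mul, mul_one, mul_zero, add_zero, smul_zero, zero_add, smul_eq_mul] at h1 h2
    obtain ⟨hi, hj⟩ := kerlem i j (by exact_mod_cast h1) (by exact_mod_cast h2)
    rw [Subgroup.mem_zpowers_iff]
    refine ⟨((i : ℕ) / 8 : ℕ), ?_⟩
    rw [fm, zpow_natCast, ← pow_mul, hj, pow_zero, mul_one]
    congr 1
    show 8 * ((i : ℕ) / 8) = (i : ℕ)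
    omega
  · rw [Subgroup.zpowers_le]
    have h8 : (a : P) ^ 8 = ⁅t, a⁆ := by
      rw [commutatorElement_def, hta]
      group
    rw [h8, commutator_def]
    exact Subgroup.commutator_mem_commutator (Subgroup.mem_top _) (Subgroup.mem_top _)

theorem pow32_fact : ∀ j : Fin 8, ((9 : ZMod 64) ^ (j : ℕ)) ^ 32 = 1 := by decide
theorem sum32_fact : ∀ j : Fin 8,
    (∑ k ∈ Finset.range 32, ((9 : ZMod 64) ^ (j : ℕ)) ^ k) = 32 := by decide
theorem mul32_fact : ∀ v : ZMod 64, v * 32 = 0 ∨ v * 32 = 32 := by decide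

theorem A16_val : ((A ^ 16 : Rˣ) : R) = !![1, 32; 0, 1] := by
  rw [Units.val_pow_eq_pow_val, show ((A : Rˣ) : R) = MA from rfl, MA_pow]
  norm_num

theorem key32 (g : P) : π g ^ 32 = 1 ∨ π g ^ 32 = A ^ 16 := by
  obtain ⟨⟨i, j⟩, rfl⟩ := fm_surj g
  rw [πfm]
  set w : ZMod 64 := 5 * ∑ k ∈ Finset.range (j : ℕ), (9 : ZMod 64) ^ k + ((i : ℕ) : ZMod 64) * 2
    with hw
  have h32 : (((A ^ (i : ℕ) * T ^ (j : ℕ)) ^ 32 : Rˣ) : R) = !![1, w * 32; 0, 1] := by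
    rw [Units.val_pow_eq_pow_val, fval, ← hw, upow, pow32_fact, sum32_fact]
  rcases mul32_fact w with h | h
  · left
    apply Units.ext
    rw [h32, h, Units.val_one, Matrix.one_fin_two]
  · right
    apply Units.ext
    rw [h32, h, A16_val]

theorem zB (k : ℤ) : (A ^ 16 : Rˣ) ^ k = 1 ∨ (A ^ 16 : Rˣ) ^ k = A ^ 16 := by
  have h2 : ((A ^ 16 : Rˣ)) ^ (2 : ℤ) = 1 := by
    rw [show (2 : ℤ) = ((2 : ℕ) : ℤ) from rfl, zpow_natCast, ← pow_mul]
    exact hA32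
  rcases Int.even_or_odd k with ⟨m, rfl⟩ | ⟨m, rfl⟩
  · left
    rw [show m + m = 2 * m by ring, _root_.zpow_mul, h2, _root_.one_zpow]
  · right
    rw [_root_.zpow_add, _root_.zpow_mul, h2, _root_.one_zpow, one_mul, zpow_one]

theorem a8_not_pow32 : (a : P) ^ 8 ∉ powSubgroup P 32 := by
  intro h8
  have hmap : π ((a : P) ^ 8) ∈ (powSubgroup P 32).map π := Subgroup.mem_map_of_mem π h8
  rw [powSubgroup, MonoidHom.map_closure] at hmap
  have hsub : Subgroup.closure (π '' {x : P | ∃ g, g ^ 32 = x}) ≤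
      Subgroup.zpowers (A ^ 16 : Rˣ) := by
    rw [Subgroup.closure_le]
    rintro _ ⟨x, ⟨g, rfl⟩, rfl⟩
    rw [SetLike.mem_coe, _root_.map_pow]
    rcases key32 g with h | h <;> rw [h]
    · exact Subgroup.one_mem _
    · exact Subgroup.mem_zpowers _
  have hmem := hsub hmap
  rw [_root_.map_pow, πa] at hmem
  obtain ⟨k, hk⟩ := Subgroup.mem_zpowers_iff.mp hmem
  rcases zB k with h | h <;> rw [h] at hk <;> have hv := congrArg Units.val hk
  · rw [Units.val_one, Units.val_pow_eq_pow_val] at hv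
    exact absurd hv (by decide)
  · rw [A16_val, Units.val_pow_eq_pow_val] at hv
    exact absurd hv (by decide)

theorem final :
    Nat.card P = 2 ^ 8 ∧
    commutator P = Subgroup.zpowers ((PresentedGroup.of 0 : P) ^ 8) ∧
    commutator P ≤ powSubgroup P 16 ∧
    ¬ commutator P ≤ powSubgroup P 32 := by
  refine ⟨card_P, comm_eq, ?_, ?_⟩
  · rw [comm_eq, Subgroup.zpowers_le]
    have ht16 : (t : P) ^ 16 = (a : P) ^ 8 := by
      rw [show (16 : ℕ) = 8 * 2 from rfl, pow_mul, ← ha4t8, ← pow_mul]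
    exact Subgroup.subset_closure ⟨t, ht16⟩
  · intro hle
    exact a8_not_pow32 (hle (by rw [comm_eq]; exact Subgroup.mem_zpowers _))

end IwasawaAux

/-- Let `G = ⟨a, t ∣ a ^ 2⁵ = 1, a ^ 2² = t ^ 2³, t a t⁻¹ = a ^ 9⟩`.  Then `G` has order
`2 ^ 8`, its commutator subgroup is `⟨a ^ 8⟩`, which is contained in `G ^ 16` but not in
`G ^ 32`; hence `G / G ^ 16` is abelian while `G / G ^ 32` is not. -/
theorem example_iwasawa_group_strength :
    Nat.card (PresentedGroup exampleRels) = 2 ^ 8 ∧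
    commutator (PresentedGroup exampleRels) =
      Subgroup.zpowers ((PresentedGroup.of 0 : PresentedGroup exampleRels) ^ 8) ∧
    commutator (PresentedGroup exampleRels) ≤ powSubgroup (PresentedGroup exampleRels) 16 ∧
    ¬ commutator (PresentedGroup exampleRels) ≤ powSubgroup (PresentedGroup exampleRels) 32 := IwasawaAux.final
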